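/- Let m ≥ 1, n ≥ 1 and let G = C₄ₙᵐ × C₂ be the direct product of m copies of the cyclic group of order 4n (with generators a₁,…,a_m) and a cyclic group of order 2 (with generator h). In 𝔽₂[G], let u_m = ∏_{i=1}^{m} (a_iⁿ + a_i^{2n} + a_i^{3n}) and u = 1 + h·u_m. Then the minimum distance of the code generated by u equals 2·3^{m/2} when m is even and equals 4·3^{(m-1)/2} when m is odd. -/

import Mathlib

noncomputable section

open MonoidAlgebra

/-- The code generated by `u` in a group algebra: the `R`-span of `{g • u : g ∈ G}`. -/
def codeGen {R : Type*} [CommSemiring R] {G : Type*} [Monoid G]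
    (u : MonoidAlgebra R G) : Submodule R (MonoidAlgebra R G) :=
  Submodule.span R (Set.range fun g : G => MonoidAlgebra.of R G g * u)

/-- The weight (support size) of an element of a group algebra. -/
def wt {R : Type*} [Semiring R] {G : Type*} (x : MonoidAlgebra R G) : ℕ :=
  x.coeff.support.card

/-- The minimum distance of the code generated by `u`: the least weight of a nonzero
element of the code. -/
def minDist {R : Type*} [CommSemiring R] {G : Type*} [Monoid G]
    (u : MonoidAlgebra R G) : ℕ :=
  sInf {n | ∃ x ∈ codeGen u, x ≠ 0 ∧ wt x = n}

/-- The group `C₄ₙᵐ × C₂`, written multiplicatively. -/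
abbrev Gp (n m : ℕ) : Type := Multiplicative ((Fin m → ZMod (4 * n)) × ZMod 2)

/-- The generator `aᵢ` of the `i`-th copy of `C₄ₙ`. -/
def agen (n m : ℕ) (i : Fin m) : Gp n m := Multiplicative.ofAdd (Pi.single i 1, 0)

/-- The generator `h` of the `C₂` factor. -/
def hgen (n m : ℕ) : Gp n m := Multiplicative.ofAdd (0, 1)

/-- `u_m = ∏ᵢ (aᵢⁿ + aᵢ²ⁿ + aᵢ³ⁿ)` in `𝔽₂[C₄ₙᵐ × C₂]`. -/
def um (n m : ℕ) : MonoidAlgebra (ZMod 2) (Gp n m) :=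
  ∏ i : Fin m,
    (of (ZMod 2) (Gp n m) (agen n m i) ^ n + of (ZMod 2) (Gp n m) (agen n m i) ^ (2 * n) +
      of (ZMod 2) (Gp n m) (agen n m i) ^ (3 * n))

/-- `u = 1 + h·u_m`. -/
def uu (n m : ℕ) : MonoidAlgebra (ZMod 2) (Gp n m) :=
  1 + of (ZMod 2) (Gp n m) (hgen n m) * um n m

-- ====== corner layer ======

/-- Corner profiles at level `k`. -/
def Corner (k a b : ℕ) : Prop :=
  (∃ i j, i + j = k ∧ a = 3 ^ i ∧ b = 3 ^ j) ∨
  (∃ i j, i + j + 1 = k ∧ a = 2 * 3 ^ i ∧ b = 2 * 3 ^ j)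

lemma corner_zero : Corner 0 1 1 := Or.inl ⟨0, 0, rfl, rfl, rfl⟩

lemma one_le_pow3 (i : ℕ) : 1 ≤ 3 ^ i := Nat.one_le_pow _ _ (by norm_num)

lemma corner_pos {k a b : ℕ} (h : Corner k a b) : 1 ≤ a ∧ 1 ≤ b := by
  rcases h with ⟨i, j, -, rfl, rfl⟩ | ⟨i, j, -, rfl, rfl⟩ <;>
    exact ⟨by have := one_le_pow3 i; omega, by have := one_le_pow3 j; omega⟩

lemma corner_right {k a b : ℕ} (h : Corner k a b) : Corner (k + 1) a (3 * b) := by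
  rcases h with ⟨i, j, hk, rfl, rfl⟩ | ⟨i, j, hk, rfl, rfl⟩
  · exact Or.inl ⟨i, j + 1, by omega, rfl, by ring⟩
  · exact Or.inr ⟨i, j + 1, by omega, rfl, by ring⟩

lemma corner_left {k a b : ℕ} (h : Corner k a b) : Corner (k + 1) (3 * a) b := by
  rcases h with ⟨i, j, hk, rfl, rfl⟩ | ⟨i, j, hk, rfl, rfl⟩
  · exact Or.inl ⟨i + 1, j, by omega, by ring, rfl⟩
  · exact Or.inr ⟨i + 1, j, by omega, by ring, rfl⟩

lemma pow3_le {i i' : ℕ} (h : i ≤ i') : (3:ℕ) ^ i ≤ 3 ^ i' :=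
  Nat.pow_le_pow_right (by norm_num) h

/-- Key combination lemma: the sum of two level-`k` corners dominates a level-`k+1` corner. -/
lemma corner_key {k a₁ b₁ a₂ b₂ : ℕ} (h₁ : Corner k a₁ b₁) (h₂ : Corner k a₂ b₂) :
    ∃ a b, Corner (k + 1) a b ∧ a ≤ a₁ + a₂ ∧ b ≤ b₁ + b₂ := by
  rcases h₁ with ⟨i₁, j₁, hk₁, rfl, rfl⟩ | ⟨i₁, j₁, hk₁, rfl, rfl⟩ <;>
    rcases h₂ with ⟨i₂, j₂, hk₂, rfl, rfl⟩ | ⟨i₂, j₂, hk₂, rfl, rfl⟩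
  · -- t1 t1
    rcases lt_trichotomy i₁ i₂ with h | h | h
    · refine ⟨3 ^ (i₁+1), 3 ^ j₁, Or.inl ⟨i₁+1, j₁, by omega, rfl, rfl⟩, ?_, ?_⟩
      · have h1 := pow3_le (show i₁+1 ≤ i₂ by omega)
        have h2 := one_le_pow3 i₁
        omega
      · exact Nat.le_add_right _ _
    · subst h
      have hj : j₁ = j₂ := by omega
      subst hj
      exact ⟨2 * 3 ^ i₁, 2 * 3 ^ j₁, Or.inr ⟨i₁, j₁, by omega, rfl, rfl⟩,
        by omega, by omega⟩
    · refine ⟨3 ^ (i₂+1), 3 ^ j₂, Or.inl ⟨i₂+1, j₂, by omega, rfl, rfl⟩, ?_, ?_⟩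
      · have h1 := pow3_le (show i₂+1 ≤ i₁ by omega)
        have h2 := one_le_pow3 i₂
        omega
      · exact Nat.le_add_left _ _
  · -- t1 t2
    by_cases h : i₁ ≤ i₂
    · refine ⟨3 ^ (i₁+1), 3 ^ j₁, Or.inl ⟨i₁+1, j₁, by omega, rfl, rfl⟩, ?_, ?_⟩
      · have h1 := pow3_le h
        have h2 : (3:ℕ)^(i₁+1) = 3^i₁ + 2*3^i₁ := by ring
        omega
      · exact Nat.le_add_right _ _
    · have hj : j₁ ≤ j₂ := by omega
      refine ⟨3 ^ i₁, 3 ^ (j₁+1), Or.inl ⟨i₁, j₁+1, by omega, rfl, rfl⟩, Nat.le_add_right _ _, ?_⟩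
      have h1 := pow3_le hj
      have h2 : (3:ℕ)^(j₁+1) = 3^j₁ + 2*3^j₁ := by ring
      omega
  · -- t2 t1
    by_cases h : i₂ ≤ i₁
    · refine ⟨3 ^ (i₂+1), 3 ^ j₂, Or.inl ⟨i₂+1, j₂, by omega, rfl, rfl⟩, ?_, ?_⟩
      · have h1 := pow3_le h
        have h2 : (3:ℕ)^(i₂+1) = 3^i₂ + 2*3^i₂ := by ring
        omega
      · exact Nat.le_add_left _ _
    · have hj : j₂ ≤ j₁ := by omega
      refine ⟨3 ^ i₂, 3 ^ (j₂+1), Or.inl ⟨i₂, j₂+1, by omega, rfl, rfl⟩, Nat.le_add_left _ _, ?_⟩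
      have h1 := pow3_le hj
      have h2 : (3:ℕ)^(j₂+1) = 3^j₂ + 2*3^j₂ := by ring
      omega
  · -- t2 t2
    rcases lt_trichotomy i₁ i₂ with h | h | h
    · refine ⟨2*3 ^ (i₁+1), 2*3 ^ j₁, Or.inr ⟨i₁+1, j₁, by omega, rfl, rfl⟩, ?_,
        Nat.le_add_right _ _⟩
      have h1 := pow3_le (show i₁+1 ≤ i₂ by omega)
      have h2 := one_le_pow3 i₁
      omega
    · subst h
      have hj : j₁ = j₂ := by omega
      subst hj
      refine ⟨3 ^ (i₁+1), 3 ^ (j₁+1), Or.inl ⟨i₁+1, j₁+1, by omega, rfl, rfl⟩, ?_, ?_⟩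
      · have h2 : (3:ℕ)^(i₁+1) = 3*3^i₁ := by ring
        omega
      · have h2 : (3:ℕ)^(j₁+1) = 3*3^j₁ := by ring
        omega
    · refine ⟨2*3 ^ (i₂+1), 2*3 ^ j₂, Or.inr ⟨i₂+1, j₂, by omega, rfl, rfl⟩, ?_,
        Nat.le_add_left _ _⟩
      have h1 := pow3_le (show i₂+1 ≤ i₁ by omega)
      have h2 := one_le_pow3 i₂
      omega

lemma aux1 (c t : ℕ) : 2 * (c * t) ≤ c + c * (t * t) := by
  zify
  nlinarith [sq_nonneg ((t:ℤ) - 1), (show (0:ℤ) ≤ (c:ℤ) by positivity),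
    mul_nonneg (show (0:ℤ) ≤ (c:ℤ) by positivity) (sq_nonneg ((t:ℤ) - 1))]

lemma aux2 (c t : ℕ) : 4 * (c * t) ≤ c + c * (3 * (t * t)) := by
  rcases Nat.eq_zero_or_pos t with h | h
  · subst h; simp
  zify
  have h1 : (1:ℤ) ≤ (t:ℤ) := by exact_mod_cast h
  have h2 : (0:ℤ) ≤ (c:ℤ) := by positivity
  nlinarith [mul_nonneg h2 (mul_nonneg (by linarith : (0:ℤ) ≤ 3*(t:ℤ) - 1) (by linarith : (0:ℤ) ≤ (t:ℤ) - 1))]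

lemma key1 (i j : ℕ) (hev : Even (i + j)) : 2 * 3 ^ ((i+j)/2) ≤ 3 ^ i + 3 ^ j := by
  wlog hij : i ≤ j generalizing i j
  · have := this j i (by rwa [Nat.add_comm]) (by omega)
    rw [Nat.add_comm j i] at this; omega
  obtain ⟨e, hje⟩ : ∃ e, j = i + 2*e := by
    rcases hev with ⟨c, hc⟩; exact ⟨(j-i)/2, by omega⟩
  have hd : (i+j)/2 = i + e := by omega
  rw [hd, hje]
  have h1 : (3:ℕ)^(i+2*e) = 3^i * (3^e * 3^e) := by rw [pow_add, two_mul, pow_add]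
  have h2 : (3:ℕ)^(i+e) = 3^i * 3^e := pow_add 3 i e
  rw [h1, h2]
  exact aux1 _ _

lemma key2 (i j : ℕ) (hev : ¬ Even (i + j)) : 4 * 3 ^ ((i+j-1)/2) ≤ 3 ^ i + 3 ^ j := by
  wlog hij : i ≤ j generalizing i j
  · have := this j i (by rwa [Nat.add_comm]) (by omega)
    rw [Nat.add_comm j i] at this; omega
  have hlt : i < j := by
    rcases Nat.lt_or_ge i j with h | h
    · exact h
    · exfalso; exact hev ⟨i, by omega⟩
  obtain ⟨e, hje⟩ : ∃ e, j = i + 2*e + 1 := by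
    refine ⟨(j - i - 1)/2, ?_⟩
    rcases Nat.even_or_odd (i+j) with h | h
    · exact absurd h hev
    · rcases h with ⟨c, hc⟩; omega
  have hd : (i+j-1)/2 = i + e := by omega
  rw [hd, hje]
  have h1 : (3:ℕ)^(i+2*e+1) = 3^i * (3 * (3^e * 3^e)) := by
    rw [pow_succ, pow_add, two_mul, pow_add]; ring
  have h2 : (3:ℕ)^(i+e) = 3^i * 3^e := pow_add 3 i e
  rw [h1, h2]
  exact aux2 _ _

/-- Every level-`m` corner has `a + b` at least the claimed minimum distance. -/
lemma corner_sum_lb {m a b : ℕ} (h : Corner m a b) :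
    (if Even m then 2 * 3 ^ (m / 2) else 4 * 3 ^ ((m - 1) / 2)) ≤ a + b := by
  rcases h with ⟨i, j, hk, rfl, rfl⟩ | ⟨i, j, hk, rfl, rfl⟩
  · subst hk
    by_cases hev : Even (i + j)
    · simp only [hev, if_true]; exact key1 i j hev
    · simp only [hev, if_false]
      have he : (i + j - 1)/2 = (i+j-1)/2 := rfl
      exact key2 i j hev
  · subst hk
    by_cases hev : Even (i + j + 1)
    · simp only [hev, if_true]
      have hodd : ¬ Even (i + j) := by
        intro h'; exact (Nat.even_add_one.mp hev) h'
      have hkey := key2 i j hodd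
      have he : (i+j+1)/2 = (i+j-1)/2 + 1 := by
        rcases Nat.even_or_odd (i+j) with h' | h'
        · exact absurd h' hodd
        · rcases h' with ⟨c, hc⟩; omega
      rw [he, pow_succ]
      have h0 := one_le_pow3 ((i+j-1)/2)
      nlinarith [hkey]
    · simp only [hev, if_false]
      have heven : Even (i + j) := by
        rcases Nat.even_or_odd (i+j) with h' | h'
        · exact h'
        · exfalso; exact hev (by rcases h' with ⟨c,hc⟩; exact ⟨c+1, by omega⟩)
      have hkey := key1 i j heven
      have he : (i+j+1-1)/2 = (i+j)/2 := by omega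
      rw [he]
      linarith

-- ====== development ======
namespace CP

variable {n m : ℕ}

abbrev Alg (n m : ℕ) := MonoidAlgebra (ZMod 2) (Gp n m)

lemma wt_def (x : Alg n m) : wt x = x.coeff.support.card := rfl

lemma zmod2_cases : ∀ r : ZMod 2, r = 0 ∨ r = 1 := by decide

lemma wt_eq_zero {x : Alg n m} : wt x = 0 ↔ x = 0 := by
  rw [wt_def, Finset.card_eq_zero, Finsupp.support_eq_empty, MonoidAlgebra.coeff_eq_zero]

lemma one_le_wt {x : Alg n m} (hx : x ≠ 0) : 1 ≤ wt x := by
  rcases Nat.eq_zero_or_pos (wt x) with h | h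
  · exact absurd (wt_eq_zero.mp h) hx
  · exact h

lemma wt_add_le (x y : Alg n m) : wt (x + y) ≤ wt x + wt y :=
  le_trans (Finset.card_le_card (Finsupp.support_add)) (Finset.card_union_le _ _)

lemma wt_mul_of (x : Alg n m) (g : Gp n m) : wt (x * of (ZMod 2) (Gp n m) g) = wt x := by
  rw [wt_def, wt_def, MonoidAlgebra.of_apply,
    MonoidAlgebra.support_coeff_mul_single x 1 (by simp) g, Finset.card_map]

lemma two_smul_zero (x : Alg n m) : x + x = 0 := by
  have : (2 : ZMod 2) = 0 := rfl
  calc x + x = (2 : ZMod 2) • x := by rw [two_smul]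
  _ = 0 := by rw [this, zero_smul]

lemma two_mul_zero (x : Alg n m) : 2 * x = 0 := by
  rw [two_mul]; exact two_smul_zero x


section Slice

/-- `i`-th coordinate of a group element. -/
def co (i : Fin m) (g : Gp n m) : ZMod (4*n) := (Multiplicative.toAdd g).1 i

lemma co_mul (i : Fin m) (g h : Gp n m) : co i (g * h) = co i g + co i h := rfl

lemma co_inv (i : Fin m) (g : Gp n m) : co i g⁻¹ = - co i g := rfl

/-- second coordinate. -/
def sco (g : Gp n m) : ZMod 2 := (Multiplicative.toAdd g).2

lemma sco_mul (g h : Gp n m) : sco (g * h) = sco g + sco h := rfl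

/-- slice along coordinate `i` at value `c`. -/
def slc (i : Fin m) (c : ZMod (4*n)) (x : Alg n m) : Alg n m :=
  MonoidAlgebra.ofCoeff (Finsupp.filter (fun g => co i g = c) x.coeff)

lemma slc_apply (i : Fin m) (c : ZMod (4*n)) (x : Alg n m) (g : Gp n m) :
    (slc i c x).coeff g = if co i g = c then x.coeff g else 0 := by
  simp [slc, Finsupp.filter_apply]

lemma slc_add (i : Fin m) (c : ZMod (4*n)) (x y : Alg n m) :
    slc i c (x + y) = slc i c x + slc i c y :=
  MonoidAlgebra.coeff_injective Finsupp.filter_add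

lemma slc_support (i : Fin m) (c : ZMod (4*n)) (x : Alg n m) :
    (slc i c x).coeff.support = x.coeff.support.filter (fun g => co i g = c) := by
  simp [slc, Finsupp.support_filter]

lemma slc_sum {α : Type*} (i : Fin m) (c : ZMod (4*n)) (F : Finset α) (f : α → Alg n m) :
    slc i c (∑ t ∈ F, f t) = ∑ t ∈ F, slc i c (f t) :=
  by
  apply MonoidAlgebra.coeff_injective
  simp only [slc, MonoidAlgebra.coeff_sum, MonoidAlgebra.coeff_ofCoeff]
  exact Finsupp.filter_sum _ _

lemma slc_mul_single (i : Fin m) (c : ZMod (4*n)) (x : Alg n m) (g₀ : Gp n m) (r : ZMod 2) :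
    slc i c (x * MonoidAlgebra.single g₀ r)
      = slc i (c - co i g₀) x * MonoidAlgebra.single g₀ r := by
  ext a
  rw [slc_apply, MonoidAlgebra.coeff_mul_single_apply, MonoidAlgebra.coeff_mul_single_apply, slc_apply]
  have hco : co i (a * g₀⁻¹) = co i a - co i g₀ := by
    rw [co_mul, co_inv]; ring
  by_cases h : co i a = c
  · rw [if_pos h, if_pos (by rw [hco, h])]
  · rw [if_neg h, if_neg, zero_mul]
    rw [hco]
    intro hc
    exact h (by linear_combination (norm := ring_nf) hc)

lemma mul_eq_sum (x w : Alg n m) :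
    x * w = ∑ g ∈ w.coeff.support, x * MonoidAlgebra.single g (w.coeff g) := by
  conv_lhs => rw [← MonoidAlgebra.sum_coeff_single w]
  rw [Finsupp.sum, Finset.mul_sum]

lemma slc_mul_ker (i : Fin m) (c : ZMod (4*n)) (x w : Alg n m)
    (hw : ∀ g ∈ w.coeff.support, co i g = 0) :
    slc i c (x * w) = slc i c x * w := by
  rw [mul_eq_sum x w, slc_sum]
  conv_rhs => rw [mul_eq_sum (slc i c x) w, ]
  refine Finset.sum_congr rfl fun g hg => ?_
  rw [slc_mul_single, hw g hg, sub_zero]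

lemma wt_slices_le (i : Fin m) (c : Fin 4 → ZMod (4*n)) (hc : Function.Injective c)
    (x : Alg n m) :
    ∑ j : Fin 4, wt (slc i (c j) x) ≤ wt x := by
  have hdisj : ∀ j k : Fin 4, j ≠ k →
      Disjoint (slc i (c j) x).coeff.support (slc i (c k) x).coeff.support := by
    intro j k hjk
    rw [Finset.disjoint_left]
    intro g hgj hgk
    rw [slc_support, Finset.mem_filter] at hgj hgk
    exact hjk (hc (hgj.2.symm.trans hgk.2))
  have hcard : ∑ j : Fin 4, wt (slc i (c j) x)
      = (Finset.univ.biUnion fun j : Fin 4 => (slc i (c j) x).coeff.support).card := by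
    rw [Finset.card_biUnion (fun j _ k _ hjk => hdisj j k hjk)]
    rfl
  rw [hcard, wt_def]
  apply Finset.card_le_card
  intro g hg
  rw [Finset.mem_biUnion] at hg
  obtain ⟨j, -, hj⟩ := hg
  rw [slc_support, Finset.mem_filter] at hj
  exact hj.1

lemma slc_self_ne_zero {x : Alg n m} {g₀ : Gp n m} (hg : g₀ ∈ x.coeff.support) (i : Fin m) :
    slc i (co i g₀) x ≠ 0 := by
  intro h
  have : g₀ ∈ (slc i (co i g₀) x).coeff.support := by
    rw [slc_support, Finset.mem_filter]; exact ⟨hg, rfl⟩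
  rw [h] at this
  simp at this

end Slice

section Elements

/-- the group element with `i`-th coordinate `c` and all others zero -/
def el (i : Fin m) (c : ZMod (4*n)) : Gp n m := Multiplicative.ofAdd (Pi.single i c, 0)

lemma co_el_same (i : Fin m) (c : ZMod (4*n)) : co i (el i c) = c := by
  simp [co, el]

lemma sco_el (i : Fin m) (c : ZMod (4*n)) : sco (el i c) = 0 := rfl

lemma co_el_ne {j i : Fin m} (h : j ≠ i) (c : ZMod (4*n)) : co j (el i c) = 0 := by
  simp [co, el, Pi.single_eq_of_ne h]

lemma el_mul (i : Fin m) (c d : ZMod (4*n)) : el i c * el i d = el i (c + d) := by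
  simp only [el, ← ofAdd_add]
  congr 1
  rw [Prod.mk_add_mk, Pi.single_add, add_zero]

lemma el_zero (i : Fin m) : el i 0 = (1 : Gp n m) := by
  simp only [el, Pi.single_zero]
  rfl

lemma agen_pow (i : Fin m) (k : ℕ) : agen n m i ^ k = el i (k : ZMod (4*n)) := by
  unfold agen el
  rw [← ofAdd_nsmul]
  congr 1
  rw [Prod.smul_mk]
  congr 1
  · funext j
    by_cases hj : j = i
    · subst hj; simp [Pi.single_eq_same, nsmul_eq_mul]
    · simp [Pi.single_eq_of_ne hj]
  · simp

/-- `j*n` as an element of `ZMod (4n)`. -/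
def cn (n : ℕ) (j : ℕ) : ZMod (4*n) := ((j*n : ℕ) : ZMod (4*n))

lemma cn_add (j l : ℕ) : cn n j + cn n l = cn n (j+l) := by
  unfold cn
  rw [← Nat.cast_add]
  congr 1
  ring

lemma cn_four (j : ℕ) : cn n (j + 4) = cn n j := by
  unfold cn
  have : (j+4)*n = j*n + 4*n := by ring
  rw [this, Nat.cast_add, ZMod.natCast_self, add_zero]

lemma cn_ne (hn : 1 ≤ n) {j l : ℕ} (hj : j ≤ 3) (hl : l ≤ 3) (hjl : j ≠ l) :
    cn n j ≠ cn n l := by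
  haveI : NeZero (4*n) := ⟨by omega⟩
  intro h
  have hv : ∀ t : ℕ, t ≤ 3 → (cn n t).val = t * n := by
    intro t ht
    exact ZMod.val_cast_of_lt (by nlinarith)
  have := congrArg ZMod.val h
  rw [hv j hj, hv l hl] at this
  have : j = l := by
    have hn0 : 0 < n := hn
    exact Nat.eq_of_mul_eq_mul_right hn0 this
  exact hjl this

lemma el_inj (i : Fin m) {c d : ZMod (4*n)} (h : el i c = el i d) : c = d := by
  have := congrArg (co i) h
  rwa [co_el_same, co_el_same] at this

/-- the factor `aᵢⁿ + aᵢ²ⁿ + aᵢ³ⁿ`, rewritten with `single`s. -/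
def sg (i : Fin m) : Alg n m :=
  MonoidAlgebra.single (el i (cn n 1)) 1 + MonoidAlgebra.single (el i (cn n 2)) 1 +
    MonoidAlgebra.single (el i (cn n 3)) 1

lemma of_agen_pow (i : Fin m) (k : ℕ) :
    (MonoidAlgebra.of (ZMod 2) (Gp n m) (agen n m i)) ^ k
      = MonoidAlgebra.single (el i ((k : ℕ) : ZMod (4*n))) 1 := by
  rw [← map_pow, agen_pow, MonoidAlgebra.of_apply]

lemma um_eq : um n m = ∏ i, (sg i : Alg n m) := by
  unfold um
  refine Finset.prod_congr rfl fun i _ => ?_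
  have c1 : cn n 1 = ((n : ℕ) : ZMod (4*n)) := by unfold cn; norm_num
  have c2 : cn n 2 = ((2*n : ℕ) : ZMod (4*n)) := rfl
  have c3 : cn n 3 = ((3*n : ℕ) : ZMod (4*n)) := rfl
  rw [sg, c1, c2, c3, of_agen_pow, of_agen_pow, of_agen_pow]

lemma sg_support_subset (i : Fin m) :
    (sg i : Alg n m).coeff.support ⊆ {el i (cn n 1), el i (cn n 2), el i (cn n 3)} := by
  intro g hg
  have h1 := Finsupp.support_add hg
  rw [Finset.mem_union] at h1
  rcases h1 with h1 | h1
  · have h2 := Finsupp.support_add h1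
    rw [Finset.mem_union] at h2
    rcases h2 with h2 | h2
    · have := Finsupp.support_single_subset h2
      simp only [Finset.mem_singleton] at this
      simp [this]
    · have := Finsupp.support_single_subset h2
      simp only [Finset.mem_singleton] at this
      simp [this]
  · have := Finsupp.support_single_subset h1
    simp only [Finset.mem_singleton] at this
    simp [this]

lemma sg_support (hn : 1 ≤ n) (i : Fin m) :
    (sg i : Alg n m).coeff.support = {el i (cn n 1), el i (cn n 2), el i (cn n 3)} := by
  have e12 : el i (cn n 1) ≠ el i (cn n 2) :=
    fun h => cn_ne hn (by norm_num) (by norm_num) (by norm_num) (el_inj i h)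
  have e13 : el i (cn n 1) ≠ el i (cn n 3) :=
    fun h => cn_ne hn (by norm_num) (by norm_num) (by norm_num) (el_inj i h)
  have e23 : el i (cn n 2) ≠ el i (cn n 3) :=
    fun h => cn_ne hn (by norm_num) (by norm_num) (by norm_num) (el_inj i h)
  refine Finset.Subset.antisymm (sg_support_subset i) ?_
  intro g hg
  simp only [Finset.mem_insert, Finset.mem_singleton] at hg
  rw [Finsupp.mem_support_iff]
  have happ : ∀ d : ZMod (4*n), (sg i : Alg n m).coeff (el i d) =
      (Finsupp.single (el i (cn n 1)) (1 : ZMod 2)) (el i d)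
      + (Finsupp.single (el i (cn n 2)) (1 : ZMod 2)) (el i d)
      + (Finsupp.single (el i (cn n 3)) (1 : ZMod 2)) (el i d) := fun d => rfl
  rcases hg with h | h | h <;> subst h <;> rw [happ]
  · rw [Finsupp.single_eq_same, Finsupp.single_eq_of_ne e12,
      Finsupp.single_eq_of_ne e13]
    decide
  · rw [Finsupp.single_eq_same, Finsupp.single_eq_of_ne (Ne.symm e12),
      Finsupp.single_eq_of_ne e23]
    decide
  · rw [Finsupp.single_eq_same, Finsupp.single_eq_of_ne (Ne.symm e13),
      Finsupp.single_eq_of_ne (Ne.symm e23)]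
    decide

lemma wt_sg (hn : 1 ≤ n) (i : Fin m) : wt (sg i : Alg n m) = 3 := by
  have e12 : el i (cn n 1) ≠ el i (cn n 2) :=
    fun h => cn_ne hn (by norm_num) (by norm_num) (by norm_num) (el_inj i h)
  have e13 : el i (cn n 1) ≠ el i (cn n 3) :=
    fun h => cn_ne hn (by norm_num) (by norm_num) (by norm_num) (el_inj i h)
  have e23 : el i (cn n 2) ≠ el i (cn n 3) :=
    fun h => cn_ne hn (by norm_num) (by norm_num) (by norm_num) (el_inj i h)
  rw [wt_def, sg_support hn i,
    Finset.card_insert_of_notMem (by simp [e12, e13]),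
    Finset.card_insert_of_notMem (by simp [e23]), Finset.card_singleton]

lemma supp_prod_sg (S : Finset (Fin m)) :
    ∀ g ∈ (∏ k ∈ S, (sg k : Alg n m)).coeff.support, sco g = 0 ∧ ∀ i, i ∉ S → co i g = 0 := by
  classical
  induction S using Finset.induction with
  | empty =>
    intro g hg
    simp only [Finset.prod_empty] at hg
    have : g = 1 := by
      have := MonoidAlgebra.support_coeff_one_subset (k := ZMod 2) (G := Gp n m) hg
      simpa using this
    subst this
    exact ⟨rfl, fun i _ => rfl⟩
  | @insert k S hkS ih =>
    intro g hg
    rw [Finset.prod_insert hkS] at hg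
    have := MonoidAlgebra.support_coeff_mul_subset (sg k) (∏ l ∈ S, (sg l : Alg n m)) hg
    rw [Finset.mem_mul] at this
    obtain ⟨a, ha, b, hb, hab⟩ := this
    have hsa : sco a = 0 ∧ ∀ i, i ≠ k → co i a = 0 := by
      have hsupp := sg_support_subset k ha
      simp only [Finset.mem_insert, Finset.mem_singleton] at hsupp
      rcases hsupp with h | h | h <;> subst h <;>
        exact ⟨sco_el _ _, fun i hi => co_el_ne hi _⟩
    have hsb := ih b hb
    constructor
    · rw [← hab, sco_mul, hsa.1, hsb.1, add_zero]
    · intro i hi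
      rw [← hab, co_mul, hsa.2 i (fun h => hi (h ▸ Finset.mem_insert_self k S)),
        hsb.2 i (fun h => hi (Finset.mem_insert_of_mem h)), add_zero]

end Elements

section FourSlot

lemma wt_zero : wt (0 : Alg n m) = 0 := by simp [wt_def]

lemma two_alg_zero : (2 : Alg n m) = 0 := by
  rw [← one_add_one_eq_two]; exact two_smul_zero 1

variable {w : Alg n m} {k : ℕ}

lemma fourSlot_main
    (IH : ∀ z : Alg n m, z ≠ 0 → ∃ a b, Corner k a b ∧ a ≤ wt z ∧ b ≤ wt (z * w))
    (p₀ p₁ p₂ p₃ : Alg n m) (h0 : p₀ ≠ 0) (h1 : p₁ + p₂ + p₃ ≠ 0) :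
    ∃ a b, Corner (k+1) a b ∧ a ≤ wt p₀ + wt p₁ + wt p₂ + wt p₃ ∧
      b ≤ wt ((p₁+p₂+p₃)*w) + wt ((p₀+p₂+p₃)*w) + wt ((p₀+p₁+p₃)*w) + wt ((p₀+p₁+p₂)*w) := by
  obtain ⟨a₁, b₁, hc₁, ha₁, hb₁⟩ := IH p₀ h0
  obtain ⟨a₂, b₂, hc₂, ha₂, hb₂⟩ := IH (p₁+p₂+p₃) h1
  obtain ⟨a, b, hc, haa, hbb⟩ := corner_key hc₁ hc₂
  refine ⟨a, b, hc, ?_, ?_⟩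
  · have h3 : wt (p₁+p₂+p₃) ≤ wt p₁ + wt p₂ + wt p₃ :=
      le_trans (wt_add_le _ _) (by have := wt_add_le p₁ p₂; omega)
    omega
  · have hq : p₀ * w = (p₀+p₂+p₃)*w + ((p₀+p₁+p₃)*w + (p₀+p₁+p₂)*w) := by
      rw [← add_mul, ← add_mul]
      congr 1
      linear_combination (-(p₀+p₁+p₂+p₃)) * (two_alg_zero (n := n) (m := m))
    have h4 : wt (p₀ * w) ≤ wt ((p₀+p₂+p₃)*w) + (wt ((p₀+p₁+p₃)*w) + wt ((p₀+p₁+p₂)*w)) := by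
      rw [hq]
      exact le_trans (wt_add_le _ _)
        (by have := wt_add_le ((p₀+p₁+p₃)*w) ((p₀+p₁+p₂)*w); omega)
    omega

lemma fourSlot
    (IH : ∀ z : Alg n m, z ≠ 0 → ∃ a b, Corner k a b ∧ a ≤ wt z ∧ b ≤ wt (z * w))
    (p₀ p₁ p₂ p₃ : Alg n m) (hp : ¬(p₀ = 0 ∧ p₁ = 0 ∧ p₂ = 0 ∧ p₃ = 0)) :
    ∃ a b, Corner (k+1) a b ∧ a ≤ wt p₀ + wt p₁ + wt p₂ + wt p₃ ∧
      b ≤ wt ((p₁+p₂+p₃)*w) + wt ((p₀+p₂+p₃)*w) + wt ((p₀+p₁+p₃)*w) + wt ((p₀+p₁+p₂)*w) := by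
  have h2 := two_alg_zero (n := n) (m := m)
  by_cases c0 : p₀ ≠ 0 ∧ p₁+p₂+p₃ ≠ 0
  · obtain ⟨a,b,hc,ha,hb⟩ := fourSlot_main IH p₀ p₁ p₂ p₃ c0.1 c0.2
    exact ⟨a,b,hc, by omega, by omega⟩
  by_cases c1 : p₁ ≠ 0 ∧ p₀+p₂+p₃ ≠ 0
  · obtain ⟨a,b,hc,ha,hb⟩ := fourSlot_main IH p₁ p₀ p₂ p₃ c1.1 c1.2
    rw [show p₁+p₀+p₃ = p₀+p₁+p₃ from by ring, show p₁+p₀+p₂ = p₀+p₁+p₂ from by ring] at hb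
    exact ⟨a,b,hc, by omega, by omega⟩
  by_cases c2 : p₂ ≠ 0 ∧ p₀+p₁+p₃ ≠ 0
  · obtain ⟨a,b,hc,ha,hb⟩ := fourSlot_main IH p₂ p₀ p₁ p₃ c2.1 c2.2
    rw [show p₂+p₀+p₃ = p₀+p₂+p₃ from by ring, show p₂+p₀+p₁ = p₀+p₁+p₂ from by ring,
      show p₂+p₁+p₃ = p₁+p₂+p₃ from by ring] at hb
    exact ⟨a,b,hc, by omega, by omega⟩
  by_cases c3 : p₃ ≠ 0 ∧ p₀+p₁+p₂ ≠ 0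
  · obtain ⟨a,b,hc,ha,hb⟩ := fourSlot_main IH p₃ p₀ p₁ p₂ c3.1 c3.2
    rw [show p₃+p₀+p₂ = p₀+p₂+p₃ from by ring, show p₃+p₀+p₁ = p₀+p₁+p₃ from by ring,
      show p₃+p₁+p₂ = p₁+p₂+p₃ from by ring] at hb
    exact ⟨a,b,hc, by omega, by omega⟩
  -- degenerate cases
  push_neg at c0 c1 c2 c3
  rcases eq_or_ne p₀ 0 with h₀ | h₀ <;> rcases eq_or_ne p₁ 0 with h₁ | h₁ <;>
    rcases eq_or_ne p₂ 0 with h₂ | h₂ <;> rcases eq_or_ne p₃ 0 with h₃ | h₃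
  · exact absurd ⟨h₀, h₁, h₂, h₃⟩ hp
  -- (0,0,0,≠)
  · subst h₀; subst h₁; subst h₂
    obtain ⟨a,b,hc,ha,hb⟩ := IH p₃ h₃
    refine ⟨a, 3*b, corner_right hc, ?_, ?_⟩ <;>
      simp only [zero_add, add_zero, zero_mul, wt_zero] <;> omega
  -- (0,0,≠,0)
  · subst h₀; subst h₁; subst h₃
    obtain ⟨a,b,hc,ha,hb⟩ := IH p₂ h₂
    refine ⟨a, 3*b, corner_right hc, ?_, ?_⟩ <;>
      simp only [zero_add, add_zero, zero_mul, wt_zero] <;> omega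
  -- (0,0,≠,≠)
  · subst h₀; subst h₁
    have := c2 h₂
    simp only [zero_add] at this
    exact absurd this h₃
  -- (0,≠,0,0)
  · subst h₀; subst h₂; subst h₃
    obtain ⟨a,b,hc,ha,hb⟩ := IH p₁ h₁
    refine ⟨a, 3*b, corner_right hc, ?_, ?_⟩ <;>
      simp only [zero_add, add_zero, zero_mul, wt_zero] <;> omega
  -- (0,≠,0,≠)
  · subst h₀; subst h₂
    have := c1 h₁
    simp only [zero_add, add_zero] at this
    exact absurd this h₃
  -- (0,≠,≠,0)
  · subst h₀; subst h₃
    have := c1 h₁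
    simp only [zero_add, add_zero] at this
    exact absurd this h₂
  -- (0,≠,≠,≠): p₁ = p₂ = p₃ =: t
  · subst h₀
    have hq1 : p₂ + p₃ = 0 := by have := c1 h₁; simpa using this
    have hq2 : p₁ + p₃ = 0 := by have := c2 h₂; simpa using this
    have e2 : p₂ = p₃ := by linear_combination hq1 - p₃ * h2
    have e1 : p₁ = p₃ := by linear_combination hq2 - p₃ * h2
    rw [e1, e2]
    obtain ⟨a,b,hc,ha,hb⟩ := IH p₃ h₃
    have hpp : p₃ + p₃ = 0 := two_smul_zero p₃
    refine ⟨3*a, b, corner_left hc, ?_, ?_⟩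
    · simp only [wt_zero, zero_add]; omega
    · rw [show p₃+p₃+p₃ = p₃ from by rw [hpp, zero_add],
        show (0:Alg n m)+p₃+p₃ = 0 from by rw [zero_add, hpp]]
      simp only [zero_mul, wt_zero]
      omega
  -- (≠,0,0,0)
  · subst h₁; subst h₂; subst h₃
    obtain ⟨a,b,hc,ha,hb⟩ := IH p₀ h₀
    refine ⟨a, 3*b, corner_right hc, ?_, ?_⟩ <;>
      simp only [zero_add, add_zero, zero_mul, wt_zero] <;> omega
  -- (≠,0,0,≠)
  · subst h₁; subst h₂
    have := c0 h₀
    simp only [zero_add] at this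
    exact absurd this h₃
  -- (≠,0,≠,0)
  · subst h₁; subst h₃
    have := c0 h₀
    simp only [zero_add, add_zero] at this
    exact absurd this h₂
  -- (≠,0,≠,≠): p₀ = p₂ = p₃ =: t
  · subst h₁
    have hq0 : p₂ + p₃ = 0 := by have := c0 h₀; simpa using this
    have hq2 : p₀ + p₃ = 0 := by have := c2 h₂; simpa using this
    have e2 : p₂ = p₃ := by linear_combination hq0 - p₃ * h2
    have e0 : p₀ = p₃ := by linear_combination hq2 - p₃ * h2
    rw [e0, e2]
    obtain ⟨a,b,hc,ha,hb⟩ := IH p₃ h₃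
    have hpp : p₃ + p₃ = 0 := two_smul_zero p₃
    refine ⟨3*a, b, corner_left hc, ?_, ?_⟩
    · simp only [wt_zero]; omega
    · rw [show (0:Alg n m)+p₃+p₃ = 0 from by rw [zero_add, hpp],
        show p₃+p₃+p₃ = p₃ from by rw [hpp, zero_add],
        show p₃+(0:Alg n m)+p₃ = 0 from by rw [add_zero, hpp]]
      simp only [zero_mul, wt_zero]
      omega
  -- (≠,≠,0,0)
  · subst h₂; subst h₃
    have := c0 h₀
    simp only [add_zero] at this
    exact absurd this h₁
  -- (≠,≠,0,≠): p₀ = p₁ = p₃ =: t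
  · subst h₂
    have hq0 : p₁ + p₃ = 0 := by have := c0 h₀; simpa using this
    have hq1 : p₀ + p₃ = 0 := by have := c1 h₁; simpa using this
    have e1 : p₁ = p₃ := by linear_combination hq0 - p₃ * h2
    have e0 : p₀ = p₃ := by linear_combination hq1 - p₃ * h2
    rw [e0, e1]
    obtain ⟨a,b,hc,ha,hb⟩ := IH p₃ h₃
    have hpp : p₃ + p₃ = 0 := two_smul_zero p₃
    refine ⟨3*a, b, corner_left hc, ?_, ?_⟩
    · simp only [wt_zero]; omega
    · rw [show p₃+(0:Alg n m)+p₃ = 0 from by rw [add_zero, hpp],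
        show p₃+p₃+p₃ = p₃ from by rw [hpp, zero_add]]
      simp only [zero_mul, wt_zero]
      omega
  -- (≠,≠,≠,0): p₀ = p₁ = p₂ =: t
  · subst h₃
    have hq0 : p₁ + p₂ = 0 := by have := c0 h₀; simpa using this
    have hq1 : p₀ + p₂ = 0 := by have := c1 h₁; simpa using this
    have e1 : p₁ = p₂ := by linear_combination hq0 - p₂ * h2
    have e0 : p₀ = p₂ := by linear_combination hq1 - p₂ * h2
    rw [e0, e1]
    obtain ⟨a,b,hc,ha,hb⟩ := IH p₂ h₂
    have hpp : p₂ + p₂ = 0 := two_smul_zero p₂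
    refine ⟨3*a, b, corner_left hc, ?_, ?_⟩
    · simp only [wt_zero]; omega
    · rw [show p₂+p₂+(0:Alg n m) = 0 from by rw [add_zero, hpp],
        show p₂+p₂+p₂ = p₂ from by rw [hpp, zero_add]]
      simp only [zero_mul, wt_zero]
      omega
  -- (≠,≠,≠,≠)
  · have hq0 : p₁ + p₂ + p₃ = 0 := c0 h₀
    have hq1 : p₀ + p₂ + p₃ = 0 := c1 h₁
    have hq2 : p₀ + p₁ + p₃ = 0 := c2 h₂
    have e01 : p₀ = p₁ := by linear_combination hq1 - hq0
    have e02 : p₀ = p₂ := by linear_combination hq2 - hq0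
    have h3z : p₃ = 0 := by
      rw [← e01, ← e02] at hq0
      linear_combination hq0 - p₀ * h2
    exact absurd h3z h₃

end FourSlot

section Step

/-- `single` of a one-coordinate group element -/
def Ee (i : Fin m) (c : ZMod (4*n)) : Alg n m := MonoidAlgebra.single (el i c) 1

lemma Ee_mul (i : Fin m) (c d : ZMod (4*n)) : (Ee i c : Alg n m) * Ee i d = Ee i (c+d) := by
  rw [Ee, Ee, Ee, MonoidAlgebra.single_mul_single, one_mul, el_mul]

lemma Ee_zero (i : Fin m) : (Ee i 0 : Alg n m) = 1 := by
  rw [Ee, el_zero, MonoidAlgebra.one_def]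

lemma wt_mul_Ee (x : Alg n m) (i : Fin m) (c : ZMod (4*n)) : wt (x * Ee i c) = wt x := by
  rw [Ee, ← MonoidAlgebra.of_apply]
  exact wt_mul_of x _

lemma co_Ee_supp (i : Fin m) (c : ZMod (4*n)) :
    ∀ g ∈ (Ee i c : Alg n m).coeff.support, co i g = c := by
  intro g hg
  have := Finsupp.support_single_subset hg
  simp only [Finset.mem_singleton] at this
  rw [this, co_el_same]

/-- the `j`-th slice of `x` above `ρ` -/
def Pp (i : Fin m) (ρ : ZMod (4*n)) (x : Alg n m) (j : ℕ) : Alg n m :=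
  slc i (ρ + cn n j) x

/-- normalized slice -/
def ptl (i : Fin m) (ρ : ZMod (4*n)) (x : Alg n m) (j : ℕ) : Alg n m :=
  Pp i ρ x j * Ee i (-(ρ + cn n j))

lemma Pp_eq (i : Fin m) (ρ : ZMod (4*n)) (x : Alg n m) (j : ℕ) :
    Pp i ρ x j = ptl i ρ x j * Ee i (ρ + cn n j) := by
  rw [ptl, mul_assoc, Ee_mul, neg_add_cancel, Ee_zero, mul_one]

lemma wt_ptl (i : Fin m) (ρ : ZMod (4*n)) (x : Alg n m) (j : ℕ) :
    wt (ptl i ρ x j) = wt (Pp i ρ x j) := by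
  rw [ptl, wt_mul_Ee]

lemma ptl_per (i : Fin m) (ρ : ZMod (4*n)) (x : Alg n m) (j : ℕ) :
    ptl i ρ x (j+4) = ptl i ρ x j := by
  rw [ptl, ptl, Pp, Pp, cn_four]

lemma sg_eq_Ee (i : Fin m) :
    (sg i : Alg n m) = Ee i (cn n 1) + Ee i (cn n 2) + Ee i (cn n 3) := rfl

/-- the main slice computation -/
lemma slc_x_sgw (i : Fin m) (ρ : ZMod (4*n)) (x w : Alg n m)
    (hw : ∀ g ∈ w.coeff.support, co i g = 0) (j : ℕ) :
    slc i (ρ + cn n j) (x * (sg i * w))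
      = ((ptl i ρ x (j+1) + ptl i ρ x (j+2) + ptl i ρ x (j+3)) * w) * Ee i (ρ + cn n j) := by
  have hexp : x * (sg i * w)
      = (x * Ee i (cn n 1)) * w + ((x * Ee i (cn n 2)) * w + (x * Ee i (cn n 3)) * w) := by
    rw [sg_eq_Ee]; ring
  have idx : ∀ l jj : ℕ, l + jj = j + 4 →
      ρ + cn n j - co i (el i (cn n l)) = ρ + cn n jj := by
    intro l jj hl
    rw [co_el_same]
    have : cn n jj + cn n l = cn n j := by
      rw [cn_add]
      have : jj + l = j + 4 := by omega
      rw [this, cn_four]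
    rw [← this]; ring
  have key : ∀ l jj : ℕ, l + jj = j + 4 →
      slc i (ρ + cn n j) ((x * Ee i (cn n l)) * w)
        = (ptl i ρ x jj * w) * Ee i (ρ + cn n j) := by
    intro l jj hl
    rw [slc_mul_ker _ _ _ _ hw, Ee, slc_mul_single, ← Ee, idx l jj hl, ← Pp,
      Pp_eq i ρ x jj]
    have : cn n jj + cn n l = cn n j := by
      rw [cn_add, show jj + l = j + 4 from by omega, cn_four]
    have hEe : Ee i (ρ + cn n jj) * Ee i (cn n l) = Ee i (ρ + cn n j) := by
      rw [Ee_mul]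
      congr 1
      rw [← this]; ring
    rw [mul_assoc (ptl i ρ x jj), hEe]
    ring
  rw [hexp, slc_add, slc_add, key 1 (j+3) (by omega), key 2 (j+2) (by omega),
    key 3 (j+1) (by omega)]
  ring

lemma wt_slices_le4 (i : Fin m) (c₀ c₁ c₂ c₃ : ZMod (4*n))
    (h01 : c₀ ≠ c₁) (h02 : c₀ ≠ c₂) (h03 : c₀ ≠ c₃)
    (h12 : c₁ ≠ c₂) (h13 : c₁ ≠ c₃) (h23 : c₂ ≠ c₃) (x : Alg n m) :
    wt (slc i c₀ x) + wt (slc i c₁ x) + wt (slc i c₂ x) + wt (slc i c₃ x) ≤ wt x := by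
  have hinj : Function.Injective (![c₀, c₁, c₂, c₃]) := by
    intro a b hab
    fin_cases a <;> fin_cases b <;>
      first
        | rfl
        | (exfalso; revert hab; simp [h01, h02, h03, h12, h13, h23,
            Ne.symm h01, Ne.symm h02, Ne.symm h03, Ne.symm h12, Ne.symm h13, Ne.symm h23])
  have := wt_slices_le i (![c₀, c₁, c₂, c₃]) hinj x
  rw [Fin.sum_univ_four] at this
  simpa using this

/-- The induction step. -/
lemma step (hn : 1 ≤ n) (i : Fin m) (w : Alg n m) (hw : ∀ g ∈ w.coeff.support, co i g = 0) (k : ℕ)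
    (IH : ∀ z : Alg n m, z ≠ 0 → ∃ a b, Corner k a b ∧ a ≤ wt z ∧ b ≤ wt (z * w))
    (x : Alg n m) (hx : x ≠ 0) :
    ∃ a b, Corner (k+1) a b ∧ a ≤ wt x ∧ b ≤ wt (x * (sg i * w)) := by
  obtain ⟨g₀, hg₀⟩ := Finsupp.support_nonempty_iff.mpr (MonoidAlgebra.coeff_eq_zero.not.mpr hx)
  set ρ := co i g₀ with hρ
  have hcn0 : cn n 0 = 0 := by simp [cn]
  -- distinctness of the four slice values
  have hd : ∀ a b : ℕ, a ≤ 3 → b ≤ 3 → a ≠ b → ρ + cn n a ≠ ρ + cn n b := by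
    intro a b ha hb hab h
    exact cn_ne hn ha hb hab (by exact add_left_cancel h)
  -- pt 0 is nonzero
  have hP0 : Pp i ρ x 0 ≠ 0 := by
    rw [Pp, hcn0, add_zero]
    exact slc_self_ne_zero hg₀ i
  have hpt0 : ptl i ρ x 0 ≠ 0 := by
    intro h
    apply hP0
    rw [Pp_eq, h, zero_mul]
  -- A-side inequality
  have hA : wt (ptl i ρ x 0) + wt (ptl i ρ x 1) + wt (ptl i ρ x 2) + wt (ptl i ρ x 3)
      ≤ wt x := by
    rw [wt_ptl, wt_ptl, wt_ptl, wt_ptl]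
    exact wt_slices_le4 i _ _ _ _
      (hd 0 1 (by norm_num) (by norm_num) (by norm_num))
      (hd 0 2 (by norm_num) (by norm_num) (by norm_num))
      (hd 0 3 (by norm_num) (by norm_num) (by norm_num))
      (hd 1 2 (by norm_num) (by norm_num) (by norm_num))
      (hd 1 3 (by norm_num) (by norm_num) (by norm_num))
      (hd 2 3 (by norm_num) (by norm_num) (by norm_num)) x
  -- B-side inequality
  have hs0 := slc_x_sgw i ρ x w hw 0
  have hs1 := slc_x_sgw i ρ x w hw 1
  have hs2 := slc_x_sgw i ρ x w hw 2
  have hs3 := slc_x_sgw i ρ x w hw 3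
  norm_num at hs0 hs1 hs2 hs3
  have p4 : ptl i ρ x 4 = ptl i ρ x 0 := ptl_per i ρ x 0
  have p5 : ptl i ρ x 5 = ptl i ρ x 1 := ptl_per i ρ x 1
  have p6 : ptl i ρ x 6 = ptl i ρ x 2 := ptl_per i ρ x 2
  rw [p4] at hs1 hs2 hs3
  rw [p5] at hs2 hs3
  rw [p6] at hs3
  have hB : wt ((ptl i ρ x 1 + ptl i ρ x 2 + ptl i ρ x 3) * w)
      + wt ((ptl i ρ x 0 + ptl i ρ x 2 + ptl i ρ x 3) * w)
      + wt ((ptl i ρ x 0 + ptl i ρ x 1 + ptl i ρ x 3) * w)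
      + wt ((ptl i ρ x 0 + ptl i ρ x 1 + ptl i ρ x 2) * w)
      ≤ wt (x * (sg i * w)) := by
    have h4 := wt_slices_le4 i (ρ + cn n 0) (ρ + cn n 1) (ρ + cn n 2) (ρ + cn n 3)
      (hd 0 1 (by norm_num) (by norm_num) (by norm_num))
      (hd 0 2 (by norm_num) (by norm_num) (by norm_num))
      (hd 0 3 (by norm_num) (by norm_num) (by norm_num))
      (hd 1 2 (by norm_num) (by norm_num) (by norm_num))
      (hd 1 3 (by norm_num) (by norm_num) (by norm_num))
      (hd 2 3 (by norm_num) (by norm_num) (by norm_num)) (x * (sg i * w))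
    rw [hs0, hs1, hs2, hs3, wt_mul_Ee, wt_mul_Ee, wt_mul_Ee, wt_mul_Ee] at h4
    rw [show ptl i ρ x 2 + ptl i ρ x 3 + ptl i ρ x 0
        = ptl i ρ x 0 + ptl i ρ x 2 + ptl i ρ x 3 from by ring,
      show ptl i ρ x 3 + ptl i ρ x 0 + ptl i ρ x 1
        = ptl i ρ x 0 + ptl i ρ x 1 + ptl i ρ x 3 from by ring,
      show ptl i ρ x 0 + ptl i ρ x 1 + ptl i ρ x 2
        = ptl i ρ x 0 + ptl i ρ x 1 + ptl i ρ x 2 from rfl] at h4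
    omega
  obtain ⟨a, b, hc, ha, hb⟩ := fourSlot IH (ptl i ρ x 0) (ptl i ρ x 1) (ptl i ρ x 2)
    (ptl i ρ x 3) (fun h => hpt0 h.1)
  exact ⟨a, b, hc, le_trans ha hA, le_trans hb hB⟩

lemma invariant (hn : 1 ≤ n) (S : Finset (Fin m)) (x : Alg n m) (hx : x ≠ 0) :
    ∃ a b, Corner S.card a b ∧ a ≤ wt x ∧ b ≤ wt (x * ∏ l ∈ S, sg l) := by
  classical
  induction S using Finset.induction generalizing x with
  | empty =>
    simp only [Finset.prod_empty, mul_one, Finset.card_empty]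
    exact ⟨1, 1, corner_zero, one_le_wt hx, one_le_wt hx⟩
  | @insert i S hiS ih =>
    rw [Finset.prod_insert hiS, Finset.card_insert_of_notMem hiS]
    have hw : ∀ g ∈ (∏ l ∈ S, (sg l : Alg n m)).coeff.support, co i g = 0 := fun g hg =>
      (supp_prod_sg S g hg).2 i hiS
    exact step hn i _ hw S.card (fun z hz => ih z hz) x hx

end Step
section Outer

/-- `h` as an algebra element. -/
def hh (n m : ℕ) : Alg n m := MonoidAlgebra.of (ZMod 2) (Gp n m) (hgen n m)

lemma mem_codeGen_iff {u x : MonoidAlgebra (ZMod 2) (Gp n m)} :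
    x ∈ codeGen u ↔ ∃ y, x = y * u := by
  constructor
  · intro hx
    induction hx using Submodule.span_induction with
    | mem z hz =>
      obtain ⟨g, rfl⟩ := hz
      exact ⟨MonoidAlgebra.of (ZMod 2) (Gp n m) g, rfl⟩
    | zero => exact ⟨0, (zero_mul u).symm⟩
    | add a b ha hb iha ihb =>
      obtain ⟨ya, rfl⟩ := iha
      obtain ⟨yb, rfl⟩ := ihb
      exact ⟨ya + yb, (add_mul _ _ _).symm⟩
    | smul c a ha iha =>
      obtain ⟨ya, rfl⟩ := iha
      exact ⟨c • ya, (smul_mul_assoc _ _ _).symm⟩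
  · rintro ⟨y, rfl⟩
    rw [show y * u = u * y from mul_comm y u, mul_eq_sum]
    apply Submodule.sum_mem
    intro g hg
    have h1 : MonoidAlgebra.single g (y.coeff g) = (y.coeff g) • MonoidAlgebra.single g (1 : ZMod 2) := by
      rw [MonoidAlgebra.smul_single', mul_one]
    rw [h1, mul_smul_comm]
    apply Submodule.smul_mem
    apply Submodule.subset_span
    exact ⟨g, by
      show MonoidAlgebra.of (ZMod 2) (Gp n m) g * u = u * MonoidAlgebra.single g 1
      rw [MonoidAlgebra.of_apply, mul_comm]⟩

/-- slice along the `C₂` coordinate -/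
def slc2 (c : ZMod 2) (x : Alg n m) : Alg n m :=
  MonoidAlgebra.ofCoeff (Finsupp.filter (fun g => sco g = c) x.coeff)

lemma slc2_split (x : Alg n m) : slc2 0 x + slc2 1 x = x := by
  have h1 : slc2 1 x = MonoidAlgebra.ofCoeff (Finsupp.filter (fun g => ¬ sco g = 0) x.coeff) := by
    unfold slc2
    ext g
    simp only [MonoidAlgebra.coeff_ofCoeff]
    rw [Finsupp.filter_apply, Finsupp.filter_apply]
    have : sco g = 1 ↔ ¬ sco g = 0 := by
      rcases zmod2_cases (sco g) with h | h <;> rw [h] <;> decide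
    by_cases h : sco g = 1
    · rw [if_pos h, if_pos (this.mp h)]
    · rw [if_neg h, if_neg (fun hc => h (this.mpr hc))]
  rw [h1]
  exact MonoidAlgebra.coeff_injective (Finsupp.filter_pos_add_filter_neg _ _)

lemma slc2_sco {c : ZMod 2} {x : Alg n m} : ∀ g ∈ (slc2 c x).coeff.support, sco g = c := by
  intro g hg
  have : g ∈ x.coeff.support.filter (fun g => sco g = c) := by
    simpa [slc2, Finsupp.support_filter] using hg
  exact (Finset.mem_filter.mp this).2

/-- sco of supports multiply additively -/
lemma sco_mul_supp {x y : Alg n m} {c d : ZMod 2}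
    (hx : ∀ g ∈ x.coeff.support, sco g = c) (hy : ∀ g ∈ y.coeff.support, sco g = d) :
    ∀ g ∈ (x * y).coeff.support, sco g = c + d := by
  classical
  intro g hg
  have := MonoidAlgebra.support_coeff_mul_subset x y hg
  rw [Finset.mem_mul] at this
  obtain ⟨a, ha, b, hb, hab⟩ := this
  rw [← hab, sco_mul, hx a ha, hy b hb]

lemma sco_hh : ∀ g ∈ (hh n m).coeff.support, sco g = 1 := by
  intro g hg
  have := Finsupp.support_single_subset hg
  simp only [Finset.mem_singleton] at this
  rw [this]
  rfl

lemma sco_um : ∀ g ∈ (um n m).coeff.support, sco g = 0 := by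
  rw [um_eq]
  intro g hg
  exact (supp_prod_sg Finset.univ g hg).1

lemma wt_add_disj {x y : Alg n m} (hx : ∀ g ∈ x.coeff.support, sco g = 0)
    (hy : ∀ g ∈ y.coeff.support, sco g = 1) : wt (x + y) = wt x + wt y := by
  have hdisj : Disjoint x.coeff.support y.coeff.support := by
    rw [Finset.disjoint_left]
    intro g hgx hgy
    have h0 := hx g hgx
    have h1 := hy g hgy
    rw [h0] at h1
    exact absurd h1 (by decide)
  rw [wt_def, wt_def, wt_def, MonoidAlgebra.coeff_add, Finsupp.support_add_eq hdisj,
    Finset.card_union_of_disjoint hdisj]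

lemma hgen_sq : hgen n m * hgen n m = 1 := by
  show Multiplicative.ofAdd ((0, 1) + (0, 1) : (Fin m → ZMod (4*n)) × ZMod 2) = 1
  rw [Prod.mk_add_mk, add_zero]
  norm_num
  rfl

lemma hh_sq : hh n m * hh n m = 1 := by
  rw [hh, ← map_mul, hgen_sq, map_one]

lemma cn_four_zero : cn n 4 = 0 := by
  have h := cn_four (n := n) (j := 0)
  have h0 : cn n 0 = 0 := by simp [cn]
  rw [← h0]
  exact h

lemma sg_sq (i : Fin m) : (sg i : Alg n m) * sg i = 1 := by
  have h2 := two_alg_zero (n := n) (m := m)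
  have expand : (sg i : Alg n m) * sg i
      = (Ee i (cn n 1) * Ee i (cn n 1) + Ee i (cn n 2) * Ee i (cn n 2)
          + Ee i (cn n 3) * Ee i (cn n 3))
        + 2 * (Ee i (cn n 1) * Ee i (cn n 2) + Ee i (cn n 1) * Ee i (cn n 3)
          + Ee i (cn n 2) * Ee i (cn n 3)) := by
    rw [sg_eq_Ee]; ring
  rw [expand, two_mul_zero, add_zero, Ee_mul, Ee_mul, Ee_mul, cn_add, cn_add, cn_add]
  norm_num
  rw [cn_four_zero, Ee_zero]
  have : cn n 6 = cn n 2 := cn_four (n := n) (j := 2)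
  rw [this]
  linear_combination (Ee i (cn n 2) : Alg n m) * h2

lemma um_sq : um n m * um n m = 1 := by
  rw [um_eq, ← Finset.prod_mul_distrib]
  rw [Finset.prod_congr rfl (fun i _ => sg_sq i), Finset.prod_const_one]

lemma uu_def' : uu n m = 1 + hh n m * um n m := rfl

lemma uu_sq : uu n m * uu n m = 0 := by
  have h2 := two_alg_zero (n := n) (m := m)
  have expand : uu n m * uu n m
      = 1 + 2 * (hh n m * um n m) + (hh n m * hh n m) * (um n m * um n m) := by
    rw [uu_def']; ring
  rw [expand, two_mul_zero, add_zero, hh_sq, um_sq, mul_one]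
  linear_combination h2

/-- every codeword is of the form `r + h·(r·um)` with `r` supported in the `sco = 0` part -/
lemma codeword_form (y : Alg n m) :
    ∃ r : Alg n m, (∀ g ∈ r.coeff.support, sco g = 0) ∧ y * uu n m = r + hh n m * (r * um n m) := by
  classical
  refine ⟨slc2 0 y + hh n m * (slc2 1 y * um n m), ?_, ?_⟩
  · intro g hg
    have := Finsupp.support_add hg
    rw [Finset.mem_union] at this
    rcases this with h | h
    · exact slc2_sco g h
    · have h1 : ∀ g' ∈ (slc2 1 y * um n m).coeff.support, sco g' = (1 : ZMod 2) + 0 :=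
        sco_mul_supp slc2_sco sco_um
      have h2 : ∀ g' ∈ (hh n m * (slc2 1 y * um n m)).coeff.support, sco g' = 1 + (1 + 0) :=
        sco_mul_supp sco_hh h1
      have := h2 g h
      rw [this]
      decide
  · have hsplit : slc2 0 y + slc2 1 y = y := slc2_split y
    have h2 := two_alg_zero (n := n) (m := m)
    have huu := uu_sq (n := n) (m := m)
    have hhh := hh_sq (n := n) (m := m)
    have hum := um_sq (n := n) (m := m)
    rw [uu_def'] at huu ⊢
    linear_combination (-(1 + hh n m * um n m)) * hsplit
      - (slc2 1 y * (hh n m * hh n m)) * hum - (slc2 1 y) * hhh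

lemma wt_codeword {r : Alg n m} (hr : ∀ g ∈ r.coeff.support, sco g = 0) :
    wt (r + hh n m * (r * um n m)) = wt r + wt (r * um n m) := by
  have h1 : ∀ g ∈ (r * um n m).coeff.support, sco g = (0 : ZMod 2) + 0 := sco_mul_supp hr sco_um
  have h2 : ∀ g ∈ (hh n m * (r * um n m)).coeff.support, sco g = (1 : ZMod 2) + (0 + 0) :=
    sco_mul_supp sco_hh h1
  rw [wt_add_disj hr (by simpa using h2)]
  congr 1
  rw [mul_comm, hh, wt_mul_of]

lemma lower (hn : 1 ≤ n) (r : Alg n m) (hr : r ≠ 0) :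
    (if Even m then 2 * 3 ^ (m / 2) else 4 * 3 ^ ((m - 1) / 2)) ≤ wt r + wt (r * um n m) := by
  obtain ⟨a, b, hc, ha, hb⟩ := invariant hn Finset.univ r hr
  rw [Finset.card_univ, Fintype.card_fin] at hc
  have := corner_sum_lb hc
  rw [um_eq]
  omega

lemma minDist_ge (hn : 1 ≤ n) (x : MonoidAlgebra (ZMod 2) (Gp n m))
    (hx : x ∈ codeGen (uu n m)) (hxne : x ≠ 0) :
    (if Even m then 2 * 3 ^ (m / 2) else 4 * 3 ^ ((m - 1) / 2)) ≤ wt x := by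
  obtain ⟨y, rfl⟩ := mem_codeGen_iff.mp hx
  obtain ⟨r, hsco, heq⟩ := codeword_form y
  have hrne : r ≠ 0 := by
    intro h
    rw [h, zero_mul, mul_zero, add_zero] at heq
    exact hxne heq
  rw [heq, wt_codeword hsco]
  have := lower hn r hrne
  have h1 : wt (r * um n m) ≤ wt r + wt (r * um n m) := Nat.le_add_left _ _
  omega

end Outer

section Witness

/-- coordinate support predicate -/
def csupp (U : Finset (Fin m)) (x : Alg n m) : Prop :=
  ∀ g ∈ x.coeff.support, sco g = 0 ∧ ∀ i, i ∉ U → co i g = 0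

lemma gp_ext {g g' : Gp n m} (hco : ∀ i, co i g = co i g') (hsco : sco g = sco g') :
    g = g' := by
  have h1 : Multiplicative.toAdd g = Multiplicative.toAdd g' := by
    apply Prod.ext
    · funext i; exact hco i
    · exact hsco
  exact h1

lemma csupp_mul {U V : Finset (Fin m)} {x y : Alg n m}
    (hx : csupp U x) (hy : csupp V y) : csupp (U ∪ V) (x * y) := by
  classical
  intro g hg
  have := MonoidAlgebra.support_coeff_mul_subset x y hg
  rw [Finset.mem_mul] at this
  obtain ⟨a, ha, b, hb, hab⟩ := this
  obtain ⟨hsa, hca⟩ := hx a ha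
  obtain ⟨hsb, hcb⟩ := hy b hb
  constructor
  · rw [← hab, sco_mul, hsa, hsb, add_zero]
  · intro i hi
    rw [Finset.mem_union] at hi
    push_neg at hi
    rw [← hab, co_mul, hca i hi.1, hcb i hi.2, add_zero]

lemma wt_one : wt (1 : Alg n m) = 1 := by
  rw [wt_def, MonoidAlgebra.support_coeff_one]
  simp

lemma eq_sum_supp (x : Alg n m) :
    x = ∑ g ∈ x.coeff.support.attach, MonoidAlgebra.single (g : Gp n m) (1 : ZMod 2) := by
  rw [Finset.sum_attach x.coeff.support (fun g => MonoidAlgebra.single g (1 : ZMod 2))]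
  conv_lhs => rw [← MonoidAlgebra.sum_coeff_single x]
  rw [Finsupp.sum]
  refine Finset.sum_congr rfl fun g hg => ?_
  have : x.coeff g = 1 := (zmod2_cases (x.coeff g)).resolve_left (Finsupp.mem_support_iff.mp hg)
  rw [this]

lemma wt_mul_csupp {U V : Finset (Fin m)} (hUV : Disjoint U V) (x y : Alg n m)
    (hx : csupp U x) (hy : csupp V y) : wt (x * y) = wt x * wt y := by
  classical
  have hone : ∀ z : ZMod 2, (1:ZMod 2) * z = 0 ↔ z = 0 := fun z => by simp
  have hdisj : ∀ g₁ g₂ : {g // g ∈ x.coeff.support}, g₁ ≠ g₂ →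
      Disjoint (MonoidAlgebra.single (g₁ : Gp n m) (1:ZMod 2) * y).coeff.support
               (MonoidAlgebra.single (g₂ : Gp n m) (1:ZMod 2) * y).coeff.support := by
    intro g₁ g₂ hne
    rw [MonoidAlgebra.support_coeff_single_mul y 1 hone _,
        MonoidAlgebra.support_coeff_single_mul y 1 hone _,
        Finset.disjoint_left]
    intro a ha1 ha2
    rw [Finset.mem_map] at ha1 ha2
    obtain ⟨z, hz, hza⟩ := ha1
    obtain ⟨z', hz', hz'a⟩ := ha2
    apply hne
    have hg₁ := hx _ g₁.2
    have hg₂ := hx _ g₂.2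
    have hzy := hy z hz
    have hz'y := hy z' hz'
    have : (g₁ : Gp n m) = (g₂ : Gp n m) := by
      apply gp_ext
      · intro i
        by_cases hiV : i ∈ V
        · have hiU : i ∉ U := Finset.disjoint_right.mp hUV hiV
          rw [hg₁.2 i hiU, hg₂.2 i hiU]
        · have h1 : co i a = co i (g₁ : Gp n m) + co i z := by
            rw [← hza, mulLeftEmbedding_apply, co_mul]
          have h2 : co i a = co i (g₂ : Gp n m) + co i z' := by
            rw [← hz'a, mulLeftEmbedding_apply, co_mul]
          rw [hzy.2 i hiV, add_zero] at h1
          rw [hz'y.2 i hiV, add_zero] at h2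
          rw [← h1, ← h2]
      · rw [hg₁.1, hg₂.1]
    exact Subtype.ext this
  have hxy : x * y = ∑ g ∈ x.coeff.support.attach, MonoidAlgebra.single (g : Gp n m) (1:ZMod 2) * y := by
    conv_lhs => rw [eq_sum_supp x]
    rw [Finset.sum_mul]
  rw [hxy, wt_def, MonoidAlgebra.coeff_sum, Finsupp.support_sum_eq_biUnion _ hdisj,
    Finset.card_biUnion (fun g₁ _ g₂ _ h => hdisj g₁ g₂ h)]
  have hcard : ∀ g : {g // g ∈ x.coeff.support},
      (MonoidAlgebra.single (g : Gp n m) (1:ZMod 2) * y).coeff.support.card = wt y := by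
    intro g
    rw [MonoidAlgebra.support_coeff_single_mul y 1 hone _, Finset.card_map, wt_def]
  rw [Finset.sum_congr rfl (fun g _ => hcard g), Finset.sum_const, Finset.card_attach,
    smul_eq_mul, wt_def]
  rfl

lemma wt_prod_csupp (F : Finset (Fin m)) (f : Fin m → Alg n m)
    (hf : ∀ i ∈ F, csupp {i} (f i)) :
    wt (∏ i ∈ F, f i) = ∏ i ∈ F, wt (f i) ∧ csupp F (∏ i ∈ F, f i) := by
  classical
  induction F using Finset.induction with
  | empty =>
    refine ⟨by simp [wt_one], ?_⟩
    intro g hg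
    have h1 : g = 1 := by
      have := MonoidAlgebra.support_coeff_one_subset (k := ZMod 2) (G := Gp n m)
        (by simpa using hg)
      simpa using this
    subst h1
    exact ⟨rfl, fun i _ => rfl⟩
  | @insert i F hiF ih =>
    have hf' : ∀ j ∈ F, csupp {j} (f j) := fun j hj => hf j (Finset.mem_insert_of_mem hj)
    obtain ⟨ihw, ihc⟩ := ih hf'
    have hfi := hf i (Finset.mem_insert_self _ _)
    have hdisj : Disjoint {i} F := by simpa using hiF
    rw [Finset.prod_insert hiF, Finset.prod_insert hiF]
    constructor
    · rw [wt_mul_csupp hdisj (f i) _ hfi ihc, ihw]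
    · have := csupp_mul hfi ihc
      rwa [show ({i} ∪ F : Finset (Fin m)) = insert i F from by
        ext a; simp [Finset.mem_insert]] at this

lemma cn_zero : cn n 0 = 0 := by simp [cn]

lemma csupp_sg (i : Fin m) : csupp {i} (sg i : Alg n m) := by
  intro g hg
  have := sg_support_subset i hg
  simp only [Finset.mem_insert, Finset.mem_singleton] at this
  rcases this with h | h | h <;> subst h <;>
    exact ⟨sco_el _ _, fun j hj => co_el_ne (by simpa using hj) _⟩

lemma csupp_one (U : Finset (Fin m)) : csupp U (1 : Alg n m) := by
  intro g hg
  have h1 : g = 1 := by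
    have := MonoidAlgebra.support_coeff_one_subset (k := ZMod 2) (G := Gp n m) (by simpa using hg)
    simpa using this
  subst h1
  exact ⟨rfl, fun j _ => rfl⟩

lemma csupp_oneE (i : Fin m) : csupp {i} (1 + Ee i (cn n 2) : Alg n m) := by
  intro g hg
  have := Finsupp.support_add hg
  rw [Finset.mem_union] at this
  rcases this with h | h
  · exact csupp_one {i} g h
  · have h1 := Finsupp.support_single_subset h
    simp only [Finset.mem_singleton] at h1
    subst h1
    exact ⟨sco_el _ _, fun j hj => co_el_ne (by simpa using hj) _⟩

lemma wt_pair {a b : Gp n m} (h : a ≠ b) :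
    wt (MonoidAlgebra.single a (1:ZMod 2) + MonoidAlgebra.single b 1) = 2 := by
  have hd : Disjoint (MonoidAlgebra.single a (1:ZMod 2)).coeff.support
      (MonoidAlgebra.single b (1:ZMod 2)).coeff.support := by
    rw [MonoidAlgebra.coeff_single, MonoidAlgebra.coeff_single,
      Finsupp.support_single_ne_zero _ one_ne_zero,
      Finsupp.support_single_ne_zero _ one_ne_zero]
    simp [h, Ne.symm h]
  rw [wt_def, MonoidAlgebra.coeff_add, Finsupp.support_add_eq hd,
    MonoidAlgebra.coeff_single, MonoidAlgebra.coeff_single, Finsupp.support_single_ne_zero _ one_ne_zero,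
    Finsupp.support_single_ne_zero _ one_ne_zero,
    show ({a} ∪ {b} : Finset (Gp n m)) = {a, b} from by ext x; simp,
    Finset.card_insert_of_notMem (by simp [h, Ne.symm h]),
    Finset.card_singleton]

lemma el_ne_one (hn : 1 ≤ n) (i : Fin m) : el i (cn n 2) ≠ 1 := by
  intro h
  have h1 := congrArg (co i) h
  rw [co_el_same, show co i (1 : Gp n m) = 0 from rfl] at h1
  exact cn_ne hn (by norm_num) (by norm_num) (by norm_num) (h1.trans cn_zero.symm)

lemma wt_oneE (hn : 1 ≤ n) (i : Fin m) : wt (1 + Ee i (cn n 2) : Alg n m) = 2 := by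
  rw [MonoidAlgebra.one_def, Ee]
  exact wt_pair (fun h => el_ne_one hn i h.symm)

lemma oneE_mul_sg (i : Fin m) :
    (1 + Ee i (cn n 2) : Alg n m) * sg i = 1 + Ee i (cn n 2) := by
  have h2 := two_alg_zero (n := n) (m := m)
  have expand : (1 + Ee i (cn n 2) : Alg n m) * sg i
      = (Ee i (cn n 1) + Ee i (cn n 2) + Ee i (cn n 3))
        + (Ee i (cn n 2) * Ee i (cn n 1) + Ee i (cn n 2) * Ee i (cn n 2)
          + Ee i (cn n 2) * Ee i (cn n 3)) := by
    rw [sg_eq_Ee]; ring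
  rw [expand, Ee_mul, Ee_mul, Ee_mul, cn_add, cn_add, cn_add]
  norm_num
  rw [cn_four_zero, Ee_zero, show cn n 5 = cn n 1 from cn_four (n := n) (j := 1)]
  linear_combination (Ee i (cn n 1) + Ee i (cn n 3) : Alg n m) * h2

/-- witness factors -/
def wfac (n m : ℕ) (i : Fin m) : Alg n m :=
  if Odd (i : ℕ) then sg i else if m % 2 = 1 ∧ (i : ℕ) = m - 1 then 1 + Ee i (cn n 2) else 1

/-- the witness -/
def wit (n m : ℕ) : Alg n m := ∏ i, wfac n m i

lemma csupp_wfac (i : Fin m) : csupp {i} (wfac n m i) := by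
  unfold wfac
  split_ifs
  · exact csupp_sg i
  · exact csupp_oneE i
  · exact csupp_one {i}

lemma wt_wfac (hn : 1 ≤ n) (i : Fin m) :
    wt (wfac n m i) = if Odd (i : ℕ) then 3 else if m % 2 = 1 ∧ (i : ℕ) = m - 1 then 2 else 1 := by
  unfold wfac
  split_ifs
  · exact wt_sg hn i
  · exact wt_oneE hn i
  · exact wt_one

lemma wfac_mul_sg (i : Fin m) :
    wfac n m i * sg i
      = if Odd (i : ℕ) then 1 else if m % 2 = 1 ∧ (i : ℕ) = m - 1 then 1 + Ee i (cn n 2)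
        else sg i := by
  unfold wfac
  split_ifs
  · exact sg_sq i
  · exact oneE_mul_sg i
  · exact one_mul _

lemma wt_wfac_mul_sg (hn : 1 ≤ n) (i : Fin m) :
    wt (wfac n m i * sg i)
      = if Odd (i : ℕ) then 1 else if m % 2 = 1 ∧ (i : ℕ) = m - 1 then 2 else 3 := by
  rw [wfac_mul_sg]
  split_ifs
  · exact wt_one
  · exact wt_oneE hn i
  · exact wt_sg hn i

lemma csupp_wfac_mul_sg (i : Fin m) : csupp {i} (wfac n m i * sg i) := by
  rw [wfac_mul_sg]
  split_ifs
  · exact csupp_one {i}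
  · exact csupp_oneE i
  · exact csupp_sg i

lemma sum_range_odd (M : ℕ) : (∑ k ∈ Finset.range M, if Odd k then 1 else 0) = M / 2 := by
  induction M with
  | zero => simp
  | succ M ih =>
    rw [Finset.sum_range_succ, ih]
    rcases Nat.even_or_odd M with h | h
    · rw [if_neg (by simpa using Nat.not_odd_iff_even.mpr h)]
      obtain ⟨c, rfl⟩ := h
      omega
    · rw [if_pos h]
      obtain ⟨c, rfl⟩ := h
      omega

lemma card_odd (m : ℕ) : (Finset.univ.filter (fun i : Fin m => Odd (i : ℕ))).card = m / 2 := by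
  rw [Finset.card_filter]
  rw [Fin.sum_univ_eq_sum_range (fun k => if Odd k then 1 else 0) m]
  exact sum_range_odd m

lemma prod_helper (m : ℕ) (hm : 1 ≤ m) (c₁ c₂ c₃ : ℕ) :
    (∏ i : Fin m, (if Odd (i : ℕ) then c₁ else if m % 2 = 1 ∧ (i : ℕ) = m - 1 then c₂ else c₃))
      = if Even m then c₁ ^ (m/2) * c₃ ^ (m/2) else c₁ ^ (m/2) * (c₂ * c₃ ^ (m/2)) := by
  classical
  rw [← Finset.prod_filter_mul_prod_filter_not Finset.univ (fun i : Fin m => Odd (i : ℕ))]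
  have hodd : (∏ i ∈ Finset.univ.filter (fun i : Fin m => Odd (i : ℕ)),
      (if Odd (i : ℕ) then c₁ else if m % 2 = 1 ∧ (i : ℕ) = m - 1 then c₂ else c₃))
      = c₁ ^ (m / 2) := by
    rw [Finset.prod_congr rfl (fun i hi => if_pos (Finset.mem_filter.mp hi).2),
      Finset.prod_const, card_odd]
  have hcard : (Finset.univ.filter (fun i : Fin m => ¬ Odd (i : ℕ))).card = m - m / 2 := by
    have h1 := Finset.card_filter_add_card_filter_not
      (s := (Finset.univ : Finset (Fin m))) (p := fun i : Fin m => Odd (i : ℕ))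
    rw [card_odd, Finset.card_univ, Fintype.card_fin] at h1
    omega
  by_cases hme : Even m
  · rw [if_pos hme, hodd]
    congr 1
    have : ∀ i ∈ Finset.univ.filter (fun i : Fin m => ¬ Odd (i : ℕ)),
        (if Odd (i : ℕ) then c₁ else if m % 2 = 1 ∧ (i : ℕ) = m - 1 then c₂ else c₃) = c₃ := by
      intro i hi
      rw [if_neg (Finset.mem_filter.mp hi).2, if_neg]
      rintro ⟨hm1, -⟩
      rw [Nat.even_iff.mp hme] at hm1
      exact absurd hm1 (by norm_num)
    rw [Finset.prod_congr rfl this, Finset.prod_const, hcard]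
    congr 1
    obtain ⟨c, rfl⟩ := hme
    omega
  · rw [if_neg hme, hodd]
    congr 1
    have hm2 : m % 2 = 1 := Nat.odd_iff.mp (Nat.not_even_iff_odd.mp hme)
    have hlst : (⟨m - 1, by omega⟩ : Fin m) ∈
        Finset.univ.filter (fun i : Fin m => ¬ Odd (i : ℕ)) := by
      rw [Finset.mem_filter]
      refine ⟨Finset.mem_univ _, ?_⟩
      rw [Nat.odd_iff]
      show ¬ (m - 1) % 2 = 1
      omega
    rw [← Finset.mul_prod_erase _ _ hlst]
    have hval : (if Odd ((⟨m - 1, by omega⟩ : Fin m) : ℕ) then c₁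
        else if m % 2 = 1 ∧ ((⟨m - 1, by omega⟩ : Fin m) : ℕ) = m - 1 then c₂ else c₃) = c₂ := by
      rw [if_neg (by rw [Nat.odd_iff]; show ¬ (m - 1) % 2 = 1; omega), if_pos ⟨hm2, rfl⟩]
    rw [hval]
    congr 1
    have : ∀ i ∈ (Finset.univ.filter (fun i : Fin m => ¬ Odd (i : ℕ))).erase
        ⟨m - 1, by omega⟩,
        (if Odd (i : ℕ) then c₁ else if m % 2 = 1 ∧ (i : ℕ) = m - 1 then c₂ else c₃) = c₃ := by
      intro i hi
      have hi1 := Finset.mem_of_mem_erase hi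
      have hi2 := Finset.ne_of_mem_erase hi
      rw [if_neg (Finset.mem_filter.mp hi1).2, if_neg]
      rintro ⟨-, hv⟩
      exact hi2 (Fin.ext hv)
    rw [Finset.prod_congr rfl this, Finset.prod_const,
      Finset.card_erase_of_mem hlst, hcard]
    congr 1
    omega

lemma wit_facts (hn : 1 ≤ n) (hm : 1 ≤ m) :
    wt (wit n m) = (if Even m then 3 ^ (m/2) else 2 * 3 ^ (m/2)) ∧
    wt (wit n m * um n m) = (if Even m then 3 ^ (m/2) else 2 * 3 ^ (m/2)) ∧
    (∀ g ∈ (wit n m).coeff.support, sco g = 0) ∧ wit n m ≠ 0 := by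
  obtain ⟨hw1, hc1⟩ := wt_prod_csupp Finset.univ (wfac n m) (fun i _ => csupp_wfac i)
  have hwitsco : ∀ g ∈ (wit n m).coeff.support, sco g = 0 := fun g hg => (hc1 g hg).1
  have hWT : wt (wit n m) = (if Even m then 3 ^ (m/2) else 2 * 3 ^ (m/2)) := by
    rw [wit, hw1, Finset.prod_congr rfl (fun i _ => wt_wfac hn i), prod_helper m hm 3 2 1]
    split_ifs
    · simp
    · simp [mul_comm]
  have hMUL : wit n m * um n m = ∏ i, (wfac n m i * sg i) := by
    rw [wit, um_eq, ← Finset.prod_mul_distrib]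
  obtain ⟨hw2, hc2⟩ := wt_prod_csupp Finset.univ (fun i => wfac n m i * sg i)
    (fun i _ => csupp_wfac_mul_sg i)
  have hWT2 : wt (wit n m * um n m) = (if Even m then 3 ^ (m/2) else 2 * 3 ^ (m/2)) := by
    rw [hMUL, hw2, Finset.prod_congr rfl (fun i _ => wt_wfac_mul_sg hn i),
      prod_helper m hm 1 2 3]
    split_ifs
    · simp
    · simp
  refine ⟨hWT, hWT2, hwitsco, ?_⟩
  intro h
  rw [h, wt_zero] at hWT
  have := one_le_pow3 (m/2)
  split_ifs at hWT <;> omega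

end Witness
end CP

theorem distance_of_intertwined_code (n m : ℕ) (hn : 1 ≤ n) (hm : 1 ≤ m) :
    minDist (uu n m) =
      if Even m then 2 * 3 ^ (m / 2) else 4 * 3 ^ ((m - 1) / 2) := by
  classical
  obtain ⟨hw1, hw2, hsco, hne⟩ := CP.wit_facts (n := n) (m := m) hn hm
  have hx0eq : CP.wit n m * uu n m = CP.wit n m + CP.hh n m * (CP.wit n m * um n m) := by
    rw [CP.uu_def']; ring
  have hmem : CP.wit n m * uu n m ∈ codeGen (uu n m) := CP.mem_codeGen_iff.mpr ⟨_, rfl⟩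
  have hwt : wt (CP.wit n m * uu n m)
      = (if Even m then 2 * 3 ^ (m / 2) else 4 * 3 ^ ((m - 1) / 2)) := by
    rw [hx0eq, CP.wt_codeword hsco, hw1, hw2]
    split_ifs with h
    · omega
    · have hm2 : m % 2 = 1 := Nat.odd_iff.mp (Nat.not_even_iff_odd.mp h)
      have he : m / 2 = (m - 1) / 2 := by omega
      rw [he]
      omega
  have hne0 : CP.wit n m * uu n m ≠ 0 := by
    intro h
    rw [h] at hwt
    have h0 : wt (0 : MonoidAlgebra (ZMod 2) (Gp n m)) = 0 := CP.wt_zero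
    rw [h0] at hwt
    have h1 := one_le_pow3 (m / 2)
    have h2 := one_le_pow3 ((m - 1) / 2)
    split_ifs at hwt <;> omega
  apply le_antisymm
  · exact Nat.sInf_le ⟨_, hmem, hne0, hwt⟩
  · refine le_csInf ⟨_, _, hmem, hne0, hwt⟩ ?_
    rintro k ⟨x, hx, hxne, rfl⟩
    exact CP.minDist_ge hn x hx hxne


end
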